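/- Let r ∈ ℓ²(ℤ) and n ∈ ℕ with n ≥ 1. Then ∑_{i ≠ -n} |(n-i)/(n+i)|² |r(n-i)|² ≤ C n² (E_n(r) + ‖r‖/n)², where E_n(r) = (∑_{|k| ≥ n} |r(k)|²)^{1/2} and C is an absolute constant. -/

import Mathlib

open scoped BigOperators

noncomputable section

/-- Lemma 3.1 of the paper. -/
theorem gap_sum_estimate :
    ∃ C : ℝ, 0 < C ∧ ∀ (r : ℤ → ℂ), Summable (fun k => ‖r k‖ ^ 2) →
      ∀ n : ℕ, 1 ≤ n →
        (∑' i : {i : ℤ // i ≠ -(n : ℤ)},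
            |(((n : ℝ) - (i.1 : ℝ)) / ((n : ℝ) + (i.1 : ℝ)))| ^ 2 * ‖r ((n : ℤ) - i.1)‖ ^ 2)
          ≤ C * (n : ℝ) ^ 2 *
            (Real.sqrt (∑' k : {k : ℤ // (n : ℤ) ≤ |k|}, ‖r k.1‖ ^ 2) +
              Real.sqrt (∑' k : ℤ, ‖r k‖ ^ 2) / (n : ℝ)) ^ 2 := by
  refine ⟨16, by norm_num, fun r hr n hn => ?_⟩
  have hn1 : (1 : ℝ) ≤ (n : ℝ) := by exact_mod_cast hn
  have hn0 : (0 : ℝ) < (n : ℝ) := by linarith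
  set F : ℤ → ℝ := fun i =>
    |(((n : ℝ) - (i : ℝ)) / ((n : ℝ) + (i : ℝ)))| ^ 2 * ‖r ((n : ℤ) - i)‖ ^ 2 with hF
  set G : ℤ → ℝ := fun k => |((k : ℝ) / (2 * (n : ℝ) - (k : ℝ)))| ^ 2 * ‖r k‖ ^ 2 with hG
  set H : ℤ → ℝ := fun k =>
    if (n : ℤ) ≤ |k| then 16 * (n : ℝ) ^ 2 * ‖r k‖ ^ 2 else ‖r k‖ ^ 2 with hH
  -- Step 1: the subtype tsum equals the full tsum of F
  have hstep1 : (∑' i : {i : ℤ // i ≠ -(n : ℤ)},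
      |(((n : ℝ) - (i.1 : ℝ)) / ((n : ℝ) + (i.1 : ℝ)))| ^ 2 * ‖r ((n : ℤ) - i.1)‖ ^ 2)
      = ∑' i : ℤ, F i := by
    have hsupp : Function.support F ⊆ {i : ℤ | i ≠ -(n : ℤ)} := by
      intro i hi
      simp only [Set.mem_setOf_eq]
      intro hcon
      apply hi
      subst hcon
      simp [hF]
    exact tsum_subtype_eq_of_support_subset hsupp
  -- Step 2: reindex i = n - k
  have hstep2 : (∑' i : ℤ, F i) = ∑' k : ℤ, G k := by
    rw [← (Equiv.subLeft (n : ℤ)).tsum_eq F]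
    apply tsum_congr
    intro k
    simp only [Equiv.subLeft_apply, hF, hG]
    have h1 : ((n : ℤ) - ((n : ℤ) - k)) = k := by ring
    rw [h1]
    have h2 : ((n : ℝ) - ((((n : ℤ) - k) : ℤ) : ℝ)) = (k : ℝ) := by push_cast; ring
    have h3 : ((n : ℝ) + ((((n : ℤ) - k) : ℤ) : ℝ)) = 2 * (n : ℝ) - (k : ℝ) := by
      push_cast; ring
    rw [h2, h3]
  -- Pointwise bound G ≤ H
  have hkey : ∀ k : ℤ, G k ≤ H k := by
    intro k
    by_cases h2 : k = 2 * (n : ℤ)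
    · have hz : 2 * (n : ℝ) - (k : ℝ) = 0 := by
        subst h2; push_cast; ring
      have hG0 : G k = 0 := by simp [hG, hz]
      rw [hG0]; simp only [hH]
      split_ifs <;> positivity
    · have h1 : (1 : ℝ) ≤ |2 * (n : ℝ) - (k : ℝ)| := by
        have hne : 2 * (n : ℤ) - k ≠ 0 := by omega
        have := Int.one_le_abs hne
        have hcast : ((|2 * (n : ℤ) - k| : ℤ) : ℝ) = |2 * (n : ℝ) - (k : ℝ)| := by
          push_cast [Int.cast_abs]; ring_nf
        calc (1 : ℝ) = ((1 : ℤ) : ℝ) := by norm_num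
          _ ≤ ((|2 * (n : ℤ) - k| : ℤ) : ℝ) := by exact_mod_cast this
          _ = _ := hcast
      have hpos : (0 : ℝ) < |2 * (n : ℝ) - (k : ℝ)| := by linarith
      have htri : |(k : ℝ)| ≤ 2 * (n : ℝ) + |2 * (n : ℝ) - (k : ℝ)| := by
        have hk : (k : ℝ) = 2 * (n : ℝ) - (2 * (n : ℝ) - (k : ℝ)) := by ring
        calc |(k : ℝ)| = |2 * (n : ℝ) - (2 * (n : ℝ) - (k : ℝ))| := by rw [← hk]
          _ ≤ |2 * (n : ℝ)| + |2 * (n : ℝ) - (k : ℝ)| := abs_sub _ _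
          _ = 2 * (n : ℝ) + |2 * (n : ℝ) - (k : ℝ)| := by
              rw [abs_of_nonneg (by linarith)]
      simp only [hH]
      split_ifs with hcase
      · -- |k| ≥ n : ratio ≤ 4n
        have hb : |(k : ℝ)| ≤ 4 * (n : ℝ) * |2 * (n : ℝ) - (k : ℝ)| := by
          nlinarith [htri, h1, hn1]
        have hrat : |(k : ℝ) / (2 * (n : ℝ) - (k : ℝ))| ≤ 4 * (n : ℝ) := by
          rw [abs_div]
          rw [div_le_iff₀ hpos]
          exact hb
        have hsq : |(k : ℝ) / (2 * (n : ℝ) - (k : ℝ))| ^ 2 ≤ (4 * (n : ℝ)) ^ 2 :=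
          pow_le_pow_left₀ (abs_nonneg _) hrat 2
        calc G k = |(k : ℝ) / (2 * (n : ℝ) - (k : ℝ))| ^ 2 * ‖r k‖ ^ 2 := rfl
          _ ≤ (4 * (n : ℝ)) ^ 2 * ‖r k‖ ^ 2 :=
              mul_le_mul_of_nonneg_right hsq (sq_nonneg _)
          _ = 16 * (n : ℝ) ^ 2 * ‖r k‖ ^ 2 := by ring
      · -- |k| < n : ratio ≤ 1
        have hkn : |k| < (n : ℤ) := lt_of_not_ge hcase
        have hknR : |(k : ℝ)| < (n : ℝ) := by
          have : ((|k| : ℤ) : ℝ) < ((n : ℤ) : ℝ) := by exact_mod_cast hkn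
          rwa [Int.cast_abs] at this
        have hle : |(k : ℝ)| ≤ |2 * (n : ℝ) - (k : ℝ)| := by
          have h4 := abs_sub_abs_le_abs_sub (2 * (n : ℝ)) (k : ℝ)
          rw [abs_of_nonneg (by linarith : (0:ℝ) ≤ 2 * (n : ℝ))] at h4
          linarith
        have hrat : |(k : ℝ) / (2 * (n : ℝ) - (k : ℝ))| ≤ 1 := by
          rw [abs_div, div_le_one hpos]
          exact hle
        have hsq : |(k : ℝ) / (2 * (n : ℝ) - (k : ℝ))| ^ 2 ≤ 1 := by
          nlinarith [abs_nonneg ((k : ℝ) / (2 * (n : ℝ) - (k : ℝ)))]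
        calc G k = |(k : ℝ) / (2 * (n : ℝ) - (k : ℝ))| ^ 2 * ‖r k‖ ^ 2 := rfl
          _ ≤ 1 * ‖r k‖ ^ 2 := mul_le_mul_of_nonneg_right hsq (sq_nonneg _)
          _ = ‖r k‖ ^ 2 := one_mul _
  -- Summability
  have hHle : ∀ k : ℤ, H k ≤ 16 * (n : ℝ) ^ 2 * ‖r k‖ ^ 2 := by
    intro k
    simp only [hH]
    split_ifs
    · exact le_rfl
    · nlinarith [mul_nonneg (show (0:ℝ) ≤ 16 * (n:ℝ)^2 - 1 by nlinarith) (sq_nonneg ‖r k‖)]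
  have hHnonneg : ∀ k : ℤ, 0 ≤ H k := by
    intro k; simp only [hH]; split_ifs <;> positivity
  have hHsum : Summable H :=
    Summable.of_nonneg_of_le hHnonneg hHle (hr.mul_left _)
  have hGnonneg : ∀ k : ℤ, 0 ≤ G k := by
    intro k; simp only [hG]; positivity
  have hGsum : Summable G := Summable.of_nonneg_of_le hGnonneg hkey hHsum
  -- Split the H sum
  set T : ℤ → ℝ := Set.indicator {k : ℤ | (n : ℤ) ≤ |k|} (fun k => ‖r k‖ ^ 2) with hT
  have hTsum : Summable T := hr.indicator _
  have hPle : ∀ k : ℤ, H k ≤ 16 * (n : ℝ) ^ 2 * T k + ‖r k‖ ^ 2 := by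
    intro k
    simp only [hH, hT]
    by_cases hc : (n : ℤ) ≤ |k|
    · rw [if_pos hc]
      have hTk : ({k : ℤ | (n : ℤ) ≤ |k|}.indicator (fun k => ‖r k‖ ^ 2)) k = ‖r k‖ ^ 2 :=
        Set.indicator_of_mem (show k ∈ {k : ℤ | (n : ℤ) ≤ |k|} from hc) _
      rw [hTk]
      nlinarith [sq_nonneg ‖r k‖]
    · rw [if_neg hc]
      have hTk : ({k : ℤ | (n : ℤ) ≤ |k|}.indicator (fun k => ‖r k‖ ^ 2)) k = 0 :=
        Set.indicator_of_notMem (show k ∉ {k : ℤ | (n : ℤ) ≤ |k|} from hc) _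
      rw [hTk]
      simp
  have hPsum : Summable (fun k => 16 * (n : ℝ) ^ 2 * T k + ‖r k‖ ^ 2) :=
    (hTsum.mul_left _).add hr
  have hsumH : ∑' k : ℤ, H k ≤ 16 * (n : ℝ) ^ 2 * (∑' k : ℤ, T k) + ∑' k : ℤ, ‖r k‖ ^ 2 := by
    calc ∑' k : ℤ, H k ≤ ∑' k : ℤ, (16 * (n : ℝ) ^ 2 * T k + ‖r k‖ ^ 2) :=
          Summable.tsum_le_tsum hPle hHsum hPsum
      _ = _ := by rw [Summable.tsum_add (hTsum.mul_left _) hr, tsum_mul_left]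
  -- identify a² and b²
  set a : ℝ := Real.sqrt (∑' k : {k : ℤ // (n : ℤ) ≤ |k|}, ‖r k.1‖ ^ 2) with ha
  set b : ℝ := Real.sqrt (∑' k : ℤ, ‖r k‖ ^ 2) with hb
  have haT : ∑' k : ℤ, T k = (∑' k : {k : ℤ // (n : ℤ) ≤ |k|}, ‖r k.1‖ ^ 2) :=
    (tsum_subtype {k : ℤ | (n : ℤ) ≤ |k|} (fun k => ‖r k‖ ^ 2)).symm
  have hTnonneg : 0 ≤ ∑' k : {k : ℤ // (n : ℤ) ≤ |k|}, ‖r k.1‖ ^ 2 :=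
    tsum_nonneg (fun k => sq_nonneg _)
  have hbnonneg : 0 ≤ ∑' k : ℤ, ‖r k‖ ^ 2 := tsum_nonneg (fun k => sq_nonneg _)
  have ha2 : a ^ 2 = ∑' k : ℤ, T k := by
    rw [ha, Real.sq_sqrt hTnonneg, haT]
  have hb2 : b ^ 2 = ∑' k : ℤ, ‖r k‖ ^ 2 := by
    rw [hb, Real.sq_sqrt hbnonneg]
  have hann : 0 ≤ a := Real.sqrt_nonneg _
  have hbnn : 0 ≤ b := Real.sqrt_nonneg _
  -- assemble
  have hfin : 16 * (n : ℝ) ^ 2 * a ^ 2 + b ^ 2 ≤ 16 * (n : ℝ) ^ 2 * (a + b / (n : ℝ)) ^ 2 := by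
    have hne : (n : ℝ) ≠ 0 := ne_of_gt hn0
    have hsq : 16 * (n : ℝ) ^ 2 * (a + b / (n : ℝ)) ^ 2 = 16 * ((n : ℝ) * a + b) ^ 2 := by
      field_simp
    rw [hsq]
    nlinarith [mul_nonneg (mul_nonneg hn0.le hann) hbnn, sq_nonneg b]
  calc (∑' i : {i : ℤ // i ≠ -(n : ℤ)},
          |(((n : ℝ) - (i.1 : ℝ)) / ((n : ℝ) + (i.1 : ℝ)))| ^ 2 * ‖r ((n : ℤ) - i.1)‖ ^ 2)
      = ∑' k : ℤ, G k := by rw [hstep1, hstep2]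
    _ ≤ ∑' k : ℤ, H k := Summable.tsum_le_tsum hkey hGsum hHsum
    _ ≤ 16 * (n : ℝ) ^ 2 * (∑' k : ℤ, T k) + ∑' k : ℤ, ‖r k‖ ^ 2 := hsumH
    _ = 16 * (n : ℝ) ^ 2 * a ^ 2 + b ^ 2 := by rw [ha2, hb2]
    _ ≤ 16 * (n : ℝ) ^ 2 * (a + b / (n : ℝ)) ^ 2 := hfin
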